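/- If there exists a Kurepa family, then there exists an almost disjoint Kurepa family of the same cardinality. -/

import Mathlib

/-- The canonical set of ordinals below `ω₁`, as a type. -/
abbrev Omega1 : Type := ((Cardinal.aleph 1).ord).ToType

/-- A Kurepa family: a family of at least `ℵ₂` subsets of `ω₁` such that for every
`α < ω₁` the family of traces on `α` is countable. -/
def IsKurepaFamily (F : Set (Set Omega1)) : Prop :=
  Cardinal.aleph 2 ≤ Cardinal.mk F ∧
  ∀ α : Omega1, {s : Set Omega1 | ∃ A ∈ F, s = A ∩ {x | x < α}}.Countable

open Cardinal Set

noncomputable instance : IsWellOrder Omega1 (· < ·) := isWellOrder_lt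

namespace KurepaAux

lemma mk_Omega1 : #Omega1 = ℵ₁ := by rw [Cardinal.mk_toType, Cardinal.card_ord]

instance : Nonempty Omega1 := by
  rw [← Cardinal.mk_ne_zero_iff, mk_Omega1]
  exact (Cardinal.aleph_pos 1).ne'

lemma countable_Iio (α : Omega1) : ({x : Omega1 | x < α}).Countable := by
  rw [countable_iff_lt_aleph_one]
  exact Cardinal.mk_Iio_ord_toType α

lemma exists_bound (S : Set Omega1) (hS : S.Countable) : ∃ b : Omega1, ∀ x ∈ S, x < b := by
  have h : #S < Ordinal.cof (Ordinal.type (α := Omega1) (· < ·)) := by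
    rw [Ordinal.type_toType, Cardinal.isRegular_aleph_one.cof_eq]
    exact (countable_iff_lt_aleph_one S).1 hS
  by_contra hc
  push_neg at hc
  rw [Ordinal.cof_type] at h
  exact h.not_ge (Order.cof_le hc)

/-- The branch of a set `A`: the family of its initial traces. -/
def branch (A : Set Omega1) : Set (Set Omega1) := {s | ∃ α : Omega1, s = A ∩ {x | x < α}}

lemma trace_countable {A t : Set Omega1} (ht : t ∈ branch A) : t.Countable := by
  obtain ⟨α, rfl⟩ := ht
  exact (countable_Iio α).mono inter_subset_right

lemma sUnion_branch (A : Set Omega1) : ⋃₀ branch A = A := by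
  apply subset_antisymm
  · rintro x ⟨t, ⟨α, rfl⟩, hx⟩
    exact hx.1
  · intro a ha
    obtain ⟨b, hb⟩ := exists_bound {a} (countable_singleton a)
    exact ⟨A ∩ {x | x < b}, ⟨b, rfl⟩, ha, hb a rfl⟩

lemma branch_uncountable {A : Set Omega1} (hA : ¬ A.Countable) : ¬ (branch A).Countable := by
  intro h
  refine hA ?_
  rw [← sUnion_branch A]
  exact h.sUnion fun t ht => trace_countable ht

lemma min_trace {A : Set Omega1} {α β : Omega1} (h : A ∩ {x | x < α} ⊆ {x | x < β}) :
    A ∩ {x | x < α} = A ∩ {x | x < min α β} := by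
  ext x
  simp only [mem_inter_iff, mem_setOf_eq, lt_min_iff]
  exact ⟨fun hx => ⟨hx.1, hx.2, h hx⟩, fun hx => ⟨hx.1, hx.2.1⟩⟩

lemma branch_inter_countable_aux {A B : Set Omega1} {x : Omega1}
    (hxA : x ∈ A) (hxB : x ∉ B) : (branch A ∩ branch B).Countable := by
  have hsub : branch A ∩ branch B ⊆ (fun δ => A ∩ {y | y < δ}) '' {δ | ¬ x < δ} := by
    rintro t ⟨⟨α, rfl⟩, ⟨β, hβ⟩⟩
    refine ⟨min α β, fun hx => ?_, (min_trace ?_).symm⟩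
    · have hxt : x ∈ A ∩ {y | y < α} := ⟨hxA, lt_of_lt_of_le hx (min_le_left _ _)⟩
      rw [hβ] at hxt
      exact hxB hxt.1
    · rw [hβ]
      exact inter_subset_right
  obtain ⟨b, hb⟩ := exists_bound {x} (countable_singleton x)
  have hc : ({δ : Omega1 | ¬ x < δ}).Countable :=
    (countable_Iio b).mono fun δ hδ => lt_of_le_of_lt (not_lt.1 hδ) (hb x rfl)
  exact (hc.image _).mono hsub

lemma branch_inter_countable {A B : Set Omega1} (hAB : A ≠ B) :
    (branch A ∩ branch B).Countable := by
  have h : ¬ A ⊆ B ∨ ¬ B ⊆ A := by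
    by_contra h
    push_neg at h
    exact hAB (subset_antisymm h.1 h.2)
  rcases h with h | h
  · obtain ⟨x, hxA, hxB⟩ := not_subset.1 h
    exact branch_inter_countable_aux hxA hxB
  · obtain ⟨x, hxB, hxA⟩ := not_subset.1 h
    rw [inter_comm]
    exact branch_inter_countable_aux hxB hxA

/-- The set of all traces of members of `F`. -/
def traces (F : Set (Set Omega1)) : Set (Set Omega1) :=
  ⋃ α : Omega1, {s | ∃ A ∈ F, s = A ∩ {x | x < α}}

lemma branch_subset_traces {F : Set (Set Omega1)} {A : Set Omega1} (hA : A ∈ F) :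
    branch A ⊆ traces F := by
  rintro t ⟨α, rfl⟩
  exact mem_iUnion.2 ⟨α, A, hA, rfl⟩

lemma traces_mem_countable {F : Set (Set Omega1)} {t : Set Omega1} (ht : t ∈ traces F) :
    t.Countable := by
  obtain ⟨α, h⟩ := mem_iUnion.1 ht
  obtain ⟨A, -, rfl⟩ := h
  exact (countable_Iio α).mono inter_subset_right

lemma mk_traces_le {F : Set (Set Omega1)}
    (h : ∀ α : Omega1, {s : Set Omega1 | ∃ A ∈ F, s = A ∩ {x | x < α}}.Countable) :
    #(traces F) ≤ ℵ₁ := by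
  calc #(traces F) ≤ #Omega1 * ⨆ α : Omega1, #({s : Set Omega1 | ∃ A ∈ F, s = A ∩ {x | x < α}}) :=
        Cardinal.mk_iUnion_le _
    _ ≤ ℵ₁ * ℵ₀ := by
        rw [mk_Omega1]
        refine mul_le_mul_right (ciSup_le' fun α => ?_) _
        have := (h α).to_subtype
        exact Cardinal.mk_le_aleph0
    _ = ℵ₁ := Cardinal.mul_eq_left (aleph0_le_aleph 1) (aleph0_le_aleph 1) aleph0_ne_zero

lemma countable_mem_traces {F : Set (Set Omega1)} {A : Set Omega1} (hA : A ∈ F)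
    (hc : A.Countable) : A ∈ traces F := by
  obtain ⟨b, hb⟩ := exists_bound A hc
  exact mem_iUnion.2 ⟨b, A, hA, (inter_eq_left.2 fun x hx => hb x hx).symm⟩

end KurepaAux

open KurepaAux

theorem exists_ad_kurepa_family_of_kurepa_family
    (F : Set (Set Omega1)) (hF : IsKurepaFamily F) :
    ∃ F' : Set (Set Omega1), IsKurepaFamily F' ∧
      (∀ A ∈ F', Cardinal.mk A = Cardinal.aleph 1) ∧
      (∀ A ∈ F', ∀ B ∈ F', A ≠ B → (A ∩ B).Countable) ∧
      Cardinal.mk F' = Cardinal.mk F := by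
  classical
  obtain ⟨hF2, hlevel⟩ := hF
  have hT : #(traces F) ≤ ℵ₁ := mk_traces_le hlevel
  obtain ⟨e⟩ : Nonempty (↥(traces F) ↪ Omega1) := by
    rw [← Cardinal.le_def, mk_Omega1]
    exact hT
  set g : Set Omega1 → Omega1 :=
    fun s => if h : s ∈ traces F then e ⟨s, h⟩ else Classical.arbitrary Omega1 with hg
  have hginj : InjOn g (traces F) := by
    intro s hs t ht hst
    simp only [hg, dif_pos hs, dif_pos ht] at hst
    exact Subtype.mk_eq_mk.1 (e.injective hst)
  set F₁ : Set (Set Omega1) := {A ∈ F | ¬ A.Countable} with hF₁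
  set G : Set Omega1 → Set Omega1 := fun A => g '' branch A with hG
  have hGinj : InjOn G F₁ := by
    intro A hA B hB hGAB
    have h1 : branch A = branch B :=
      (hginj.image_eq_image_iff (branch_subset_traces hA.1) (branch_subset_traces hB.1)).1 hGAB
    rw [← sUnion_branch A, h1, sUnion_branch B]
  have hmkG : ∀ A ∈ F₁, #(G A) = ℵ₁ := by
    intro A hA
    apply le_antisymm
    · rw [← mk_Omega1]
      exact mk_set_le _
    · have h1 : #(G A) = #(branch A) :=
        mk_image_eq_of_injOn _ _ (hginj.mono (branch_subset_traces hA.1))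
      rw [h1]
      by_contra h
      push_neg at h
      exact branch_uncountable hA.2 ((countable_iff_lt_aleph_one _).2 h)
  have hFcount : #({A ∈ F | A.Countable} : Set (Set Omega1)) ≤ ℵ₁ := by
    refine le_trans (mk_le_mk_of_subset ?_) hT
    rintro A ⟨hA, hc⟩
    exact countable_mem_traces hA hc
  have hF1F : #F₁ = #F := by
    apply le_antisymm (mk_le_mk_of_subset (sep_subset _ _))
    by_contra h
    push_neg at h
    have hsplit : F ⊆ F₁ ∪ {A ∈ F | A.Countable} := by
      intro A hA
      by_cases hc : A.Countable
      · exact Or.inr ⟨hA, hc⟩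
      · exact Or.inl ⟨hA, hc⟩
    have h2 : #F ≤ #F₁ + #({A ∈ F | A.Countable} : Set (Set Omega1)) :=
      le_trans (mk_le_mk_of_subset hsplit) (mk_union_le _ _)
    have h3 : ℵ₁ < #F := lt_of_lt_of_le (aleph_lt_aleph.2 one_lt_two) hF2
    have h4 : #F₁ + #({A ∈ F | A.Countable} : Set (Set Omega1)) < #F :=
      Cardinal.add_lt_of_lt (le_trans (aleph0_le_aleph 1) h3.le) h (lt_of_le_of_lt hFcount h3)
    exact absurd h2 (not_le.2 h4)
  have hmkF' : #(G '' F₁) = #F₁ := mk_image_eq_of_injOn _ _ hGinj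
  refine ⟨G '' F₁, ⟨?_, ?_⟩, ?_, ?_, ?_⟩
  · rw [hmkF', hF1F]
    exact hF2
  · -- trace countability for the new family
    intro γ
    set S : Set (Set Omega1) := traces F ∩ g ⁻¹' {x | x < γ} with hS
    have hScount : S.Countable := by
      rw [countable_iff_lt_aleph_one]
      calc #S = #(g '' S) := (mk_image_eq_of_injOn _ _ (hginj.mono inter_subset_left)).symm
        _ ≤ #({x : Omega1 | x < γ}) := mk_le_mk_of_subset (by rintro x ⟨t, ht, rfl⟩; exact ht.2)
        _ < ℵ₁ := Cardinal.mk_Iio_ord_toType γ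
    have hUS : (⋃₀ S).Countable := hScount.sUnion fun t ht => traces_mem_countable ht.1
    obtain ⟨β, hβ⟩ := exists_bound _ hUS
    have htsub : ∀ t ∈ S, t ⊆ {x : Omega1 | x < β} := fun t ht x hx => hβ x ⟨t, ht, hx⟩
    set Φ : Set Omega1 → Set Omega1 :=
      fun u => g '' {t | t ∈ S ∧ ∃ δ : Omega1, δ ≤ β ∧ t = u ∩ {x | x < δ}} with hΦ
    refine ((hlevel β).image Φ).mono ?_
    rintro s ⟨A', ⟨A, hA, rfl⟩, rfl⟩
    refine ⟨A ∩ {x | x < β}, ⟨A, hA.1, rfl⟩, ?_⟩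
    ext x
    simp only [hΦ, hG, mem_image, mem_inter_iff, mem_setOf_eq]
    constructor
    · rintro ⟨t, ⟨htS, δ, hδβ, rfl⟩, rfl⟩
      refine ⟨⟨A ∩ {x | x < β} ∩ {x | x < δ}, ⟨δ, ?_⟩, rfl⟩, htS.2⟩
      ext y
      simp only [mem_inter_iff, mem_setOf_eq, and_assoc]
      exact ⟨fun hy => ⟨hy.1, hy.2.2⟩, fun hy => ⟨hy.1, lt_of_lt_of_le hy.2 hδβ, hy.2⟩⟩
    · rintro ⟨⟨t, ⟨α, rfl⟩, rfl⟩, hlt⟩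
      have htS : A ∩ {x | x < α} ∈ S := ⟨branch_subset_traces hA.1 ⟨α, rfl⟩, hlt⟩
      refine ⟨A ∩ {x | x < α}, ⟨htS, min α β, min_le_right _ _, ?_⟩, rfl⟩
      rw [min_trace (htsub _ htS)]
      ext y
      simp only [mem_inter_iff, mem_setOf_eq, lt_min_iff, and_assoc]
      tauto
  · rintro A' ⟨A, hA, rfl⟩
    exact hmkG A hA
  · rintro A' ⟨A, hA, rfl⟩ B' ⟨B, hB, rfl⟩ hne
    have hAB : A ≠ B := fun h => hne (by rw [h])
    have heq : G A ∩ G B = g '' (branch A ∩ branch B) :=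
      (hginj.image_inter (branch_subset_traces hA.1) (branch_subset_traces hB.1)).symm
    rw [heq]
    exact (branch_inter_countable hAB).image _
  · rw [hmkF', hF1F]
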